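/- For every integer n ≥ 2, the labeling length of the path P_n on n vertices equals ⌊n/2⌋, i.e. λ(P_n) = ⌊n/2⌋. -/

import Mathlib

/-- `f` is a distance `l`-labeling of `G`: its image is `{0,…,l}` or `{1,…,l}`, and any two
distinct vertices sharing a label `k` are at graph distance exactly `k`. -/
def IsDistLabeling {V : Type*} (G : SimpleGraph V) (l : ℕ) (f : V → ℕ) : Prop :=
  (Set.range f = Set.Icc 0 l ∨ Set.range f = Set.Icc 1 l) ∧
    ∀ u v : V, u ≠ v → f u = f v → G.dist u v = f u

/-- The labeling length of `G`: the least `l` admitting a distance `l`-labeling. -/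
noncomputable def labelingLength {V : Type*} (G : SimpleGraph V) : ℕ :=
  sInf {l : ℕ | ∃ f : V → ℕ, IsDistLabeling G l f}

lemma pathGraph_connected' {n : ℕ} (hn : 1 ≤ n) : (SimpleGraph.pathGraph n).Connected := by
  cases n with
  | zero => omega
  | succ k => exact SimpleGraph.pathGraph_connected k

lemma pathGraph_walk_lb {n : ℕ} {w x : Fin n} (p : (SimpleGraph.pathGraph n).Walk w x) :
    ((w : ℤ) - (x : ℤ)).natAbs ≤ p.length := by
  induction p with
  | nil => simp
  | @cons a b c h q ih =>
    rw [SimpleGraph.pathGraph_adj] at h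
    rw [SimpleGraph.Walk.length_cons]
    omega

lemma pathGraph_dist_ub {n : ℕ} (d : ℕ) : ∀ (w x : Fin n), (w : ℕ) + d = (x : ℕ) →
    (SimpleGraph.pathGraph n).dist w x ≤ d := by
  induction d with
  | zero =>
    intro w x h
    have : w = x := Fin.ext (by omega)
    subst this
    simp
  | succ d ih =>
    intro w x h
    have hx := x.isLt
    have hlt : (w : ℕ) + 1 < n := by omega
    set w' : Fin n := ⟨(w : ℕ) + 1, by omega⟩ with hw'
    have hadj : (SimpleGraph.pathGraph n).Adj w w' := by
      rw [SimpleGraph.pathGraph_adj]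
      left
      rfl
    have h1 : (SimpleGraph.pathGraph n).dist w w' = 1 :=
      SimpleGraph.dist_eq_one_iff_adj.mpr hadj
    have h2 : (SimpleGraph.pathGraph n).dist w' x ≤ d := ih w' x (by simp [hw']; omega)
    have hc : (SimpleGraph.pathGraph n).Connected := pathGraph_connected' (by omega)
    calc (SimpleGraph.pathGraph n).dist w x
        ≤ (SimpleGraph.pathGraph n).dist w w' + (SimpleGraph.pathGraph n).dist w' x :=
          hc.dist_triangle
      _ ≤ 1 + d := by omega
      _ = d + 1 := by omega

lemma pathGraph_dist {n : ℕ} (u v : Fin n) :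
    (SimpleGraph.pathGraph n).dist u v = ((u : ℤ) - (v : ℤ)).natAbs := by
  have hc : (SimpleGraph.pathGraph n).Connected := pathGraph_connected' (by have := u.isLt; omega)
  obtain ⟨p, -, hp⟩ := hc.exists_path_of_dist u v
  have hlb := pathGraph_walk_lb p
  rw [hp] at hlb
  rcases le_total (u : ℕ) (v : ℕ) with hle | hle
  · have hub := pathGraph_dist_ub ((v : ℕ) - (u : ℕ)) u v (by omega)
    omega
  · have hub := pathGraph_dist_ub ((u : ℕ) - (v : ℕ)) v u (by omega)
    rw [SimpleGraph.dist_comm] at hub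
    omega

/-- Lower bound: any distance `l`-labeling of `P n` satisfies `n/2 ≤ l`. -/
lemma labeling_lb {n l : ℕ} (hn : 2 ≤ n) (f : Fin n → ℕ)
    (hf : IsDistLabeling (SimpleGraph.pathGraph n) l f) : n / 2 ≤ l := by
  obtain ⟨hr, hd⟩ := hf
  have hle : ∀ j, f j ≤ l := by
    intro j
    have hj : f j ∈ Set.range f := ⟨j, rfl⟩
    rcases hr with h | h <;> rw [h] at hj <;> exact hj.2
  -- fiber of 0 has at most one element
  have h0 : (Finset.univ.filter (fun a : Fin n => f a = 0)).card ≤ 1 := by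
    rw [Finset.card_le_one]
    intro a ha b hb
    simp only [Finset.mem_filter] at ha hb
    by_contra hne
    have hdist := hd a b hne (ha.2.trans hb.2.symm)
    rw [pathGraph_dist, ha.2] at hdist
    exact hne (Fin.ext (by omega))
  -- every other fiber has at most two elements
  have h2 : ∀ k ∈ Finset.Icc 1 l,
      (Finset.univ.filter (fun a : Fin n => f a = k)).card ≤ 2 := by
    intro k hk
    by_contra hgt
    push_neg at hgt
    obtain ⟨a, ha, b, hb, c, hcc, hab, hac, hbc⟩ := Finset.two_lt_card.mp hgt
    simp only [Finset.mem_filter] at ha hb hcc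
    have d1 := hd a b hab (ha.2.trans hb.2.symm)
    have d2 := hd a c hac (ha.2.trans hcc.2.symm)
    have d3 := hd b c hbc (hb.2.trans hcc.2.symm)
    rw [pathGraph_dist, ha.2] at d1 d2
    rw [pathGraph_dist, hb.2] at d3
    rw [Finset.mem_Icc] at hk
    have hab' : (a : ℕ) ≠ (b : ℕ) := fun h => hab (Fin.ext h)
    have hac' : (a : ℕ) ≠ (c : ℕ) := fun h => hac (Fin.ext h)
    have hbc' : (b : ℕ) ≠ (c : ℕ) := fun h => hbc (Fin.ext h)
    omega
  have key : (Finset.univ : Finset (Fin n)).card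
      = ∑ k ∈ Finset.Icc 0 l, (Finset.univ.filter (fun a : Fin n => f a = k)).card :=
    Finset.card_eq_sum_card_fiberwise (by
      intro x _
      rw [Finset.mem_coe, Finset.mem_Icc]
      exact ⟨Nat.zero_le _, hle x⟩)
  have hins : Finset.Icc 0 l = insert 0 (Finset.Icc 1 l) := by
    ext j
    simp [Finset.mem_Icc, Finset.mem_insert]
    omega
  rw [hins, Finset.sum_insert (by simp)] at key
  have hsum : ∑ k ∈ Finset.Icc 1 l, (Finset.univ.filter (fun a : Fin n => f a = k)).card
      ≤ (Finset.Icc 1 l).card • 2 := Finset.sum_le_card_nsmul _ _ 2 h2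
  rw [Nat.card_Icc] at hsum
  have hcard : (Finset.univ : Finset (Fin n)).card = n := Finset.card_fin n
  have : n ≤ 1 + l * 2 := by
    rw [hcard] at key
    simp only [smul_eq_mul] at hsum
    omega
  omega

/-- Upper bound construction. -/
lemma labeling_ub {n : ℕ} (hn : 2 ≤ n) :
    ∃ f : Fin n → ℕ, IsDistLabeling (SimpleGraph.pathGraph n) (n / 2) f := by
  set m := n / 2 with hm
  have hmn : 2 * m ≤ n ∧ n ≤ 2 * m + 1 := by omega
  refine ⟨fun j => (if (j : ℕ) ≤ m then (m : ℤ) - 2 * (j : ℕ)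
      else 3 * (m : ℤ) + 1 - 2 * (j : ℕ)).natAbs, ?_, ?_⟩
  · -- range condition
    by_cases hn2 : n = 2
    · right
      subst hn2
      have hm1 : m = 1 := by omega
      ext k
      simp only [Set.mem_range, Set.mem_Icc]
      constructor
      · rintro ⟨j, rfl⟩
        have hj := j.isLt
        split_ifs with h <;> (constructor <;> omega)
      · intro hk
        refine ⟨⟨0, by omega⟩, ?_⟩
        rw [if_pos (by simp)]
        simp
        omega
    · left
      have hn3 : 3 ≤ n := by omega
      ext k
      simp only [Set.mem_range, Set.mem_Icc]
      constructor
      · rintro ⟨j, rfl⟩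
        have hj := j.isLt
        split_ifs with h <;> (constructor <;> omega)
      · rintro ⟨-, hk⟩
        by_cases hpar : k % 2 = m % 2
        · refine ⟨⟨(m - k) / 2, by omega⟩, ?_⟩
          have hv : ((⟨(m - k) / 2, by omega⟩ : Fin n) : ℕ) = (m - k) / 2 := rfl
          rw [hv, if_pos (by omega)]
          omega
        · refine ⟨⟨(3 * m + 1 - k) / 2, by omega⟩, ?_⟩
          have hv : ((⟨(3 * m + 1 - k) / 2, by omega⟩ : Fin n) : ℕ) = (3 * m + 1 - k) / 2 := rfl
          rw [hv, if_neg (by omega)]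
          omega
  · -- distance condition
    intro u v hne hfeq
    have hu := u.isLt
    have hv := v.isLt
    have hne' : (u : ℕ) ≠ (v : ℕ) := fun h => hne (Fin.ext h)
    rw [pathGraph_dist]
    dsimp only at hfeq ⊢
    split_ifs at hfeq ⊢ <;> omega

theorem labelingLength_pathGraph (n : ℕ) (hn : 2 ≤ n) :
    labelingLength (SimpleGraph.pathGraph n) = n / 2 := by
  obtain ⟨f, hf⟩ := labeling_ub hn
  refine le_antisymm (Nat.sInf_le ⟨f, hf⟩) (le_csInf ⟨n / 2, f, hf⟩ ?_)
  rintro l ⟨g, hg⟩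
  exact labeling_lb hn g hg
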